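/- Let A be an f×f positive definite symmetric integer matrix with even diagonal entries, defining Q(x) = (1/2)x^T A x and B(x,y) = x^T A y. Fix linearly independent h_1,…,h_n ∈ ℤ^f, v ∈ ℂ^f, k ∈ ℕ, and define θ(τ, z) = Σ_{m ∈ ℤ^f} B(v,m)^k e^{2πi τ Q(m)} e^{2πi Σ_j z_j B(m,h_j)} for τ ∈ ℍ, z ∈ ℂ^n. If B(v,h_j)=0 for all j, then for all λ, μ ∈ ℤ^n: θ(τ, z + λτ + μ) = exp(−πi(G[λ]τ + 2 z^T G λ)) · θ(τ, z), where G is the Gram matrix (B(h_i,h_j)) and G[λ] = λ^T G λ. -/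
import Mathlib


open Complex Matrix

/-- Complex-valued bilinear pairing `B(v,m) = vᵀ A m` for `v ∈ ℂ^f`, `m ∈ ℤ^f`. -/
noncomputable def Bpair {f : ℕ} (A : Matrix (Fin f) (Fin f) ℤ)
    (v : Fin f → ℂ) (m : Fin f → ℤ) : ℂ :=
  ∑ i, ∑ j, v i * (A i j : ℂ) * (m j : ℂ)

/-- The theta series
`θ(τ,z) = Σ_{m∈ℤ^f} B(v,m)^k e^{2πiτQ(m)} e^{2πiΣ_j z_j B(m,h_j)}`
with `Q(m) = (1/2) mᵀ A m` (so `2πiτQ(m) = πiτ·mᵀAm`). -/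
noncomputable def thetaSeries {f n : ℕ} (A : Matrix (Fin f) (Fin f) ℤ)
    (v : Fin f → ℂ) (h : Fin n → (Fin f → ℤ)) (k : ℕ)
    (τ : ℂ) (z : Fin n → ℂ) : ℂ :=
  ∑' m : Fin f → ℤ,
    Bpair A v m ^ k *
      Complex.exp (Real.pi * I * τ * Bpair A ((↑) ∘ m) m) *
      Complex.exp (2 * Real.pi * I * ∑ j, z j * Bpair A ((↑) ∘ m) (h j))

section Aux

variable {f n : ℕ} (A : Matrix (Fin f) (Fin f) ℤ)

lemma Bpair_symm (hAsymm : Aᵀ = A) (x y : Fin f → ℤ) :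
    Bpair A ((↑) ∘ x) y = Bpair A ((↑) ∘ y) x := by
  unfold Bpair
  rw [Finset.sum_comm]
  refine Finset.sum_congr rfl fun j _ => Finset.sum_congr rfl fun i _ => ?_
  have hA : A i j = A j i := congrFun (congrFun hAsymm j) i
  simp only [Function.comp_apply, hA]; ring

lemma Bpair_sub_right (v : Fin f → ℂ) (m m' : Fin f → ℤ) :
    Bpair A v (m - m') = Bpair A v m - Bpair A v m' := by
  unfold Bpair
  rw [← Finset.sum_sub_distrib]
  refine Finset.sum_congr rfl fun i _ => ?_
  rw [← Finset.sum_sub_distrib]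
  refine Finset.sum_congr rfl fun j _ => ?_
  simp only [Pi.sub_apply]
  push_cast; ring

lemma Bpair_sum_right (v : Fin f → ℂ) (c : Fin n → ℤ) (g : Fin n → Fin f → ℤ) :
    Bpair A v (fun i => ∑ j, c j * g j i) = ∑ j, (c j : ℂ) * Bpair A v (g j) := by
  unfold Bpair
  have key : ∀ a b, v a * (A a b : ℂ) * (((∑ j, c j * g j b : ℤ)) : ℂ)
      = ∑ j, (c j : ℂ) * (v a * (A a b : ℂ) * (g j b : ℂ)) := by
    intro a b
    push_cast
    rw [Finset.mul_sum]
    exact Finset.sum_congr rfl fun j _ => by ring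
  simp only [key]
  calc ∑ a, ∑ b, ∑ j, (c j : ℂ) * (v a * (A a b : ℂ) * (g j b : ℂ))
      = ∑ a, ∑ j, ∑ b, (c j : ℂ) * (v a * (A a b : ℂ) * (g j b : ℂ)) :=
        Finset.sum_congr rfl fun a _ => Finset.sum_comm
    _ = ∑ j, ∑ a, ∑ b, (c j : ℂ) * (v a * (A a b : ℂ) * (g j b : ℂ)) := Finset.sum_comm
    _ = ∑ j, (c j : ℂ) * ∑ a, ∑ b, v a * (A a b : ℂ) * (g j b : ℂ) := by
        simp only [Finset.mul_sum]

lemma Bpair_eq_int (x y : Fin f → ℤ) :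
    Bpair A ((↑) ∘ x) y = ((∑ a, ∑ b, x a * A a b * y b : ℤ) : ℂ) := by
  unfold Bpair; push_cast; rfl

end Aux

theorem theta_elliptic_transformation {f n : ℕ}
    (A : Matrix (Fin f) (Fin f) ℤ) (hAsymm : Aᵀ = A)
    (hAeven : ∀ i, 2 ∣ A i i)
    (hApos : (A.map ((↑) : ℤ → ℝ)).PosDef)
    (h : Fin n → (Fin f → ℤ)) (hLI : LinearIndependent ℤ h)
    (v : Fin f → ℂ) (k : ℕ)
    (hv : ∀ j, Bpair A v (h j) = 0)
    (τ : ℂ) (hτ : 0 < τ.im) (z : Fin n → ℂ) (l μ : Fin n → ℤ) :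
    thetaSeries A v h k τ (fun j => z j + (l j : ℂ) * τ + (μ j : ℂ)) =
      Complex.exp (-(Real.pi * I) *
          ((∑ i, ∑ j, (l i : ℂ) * Bpair A ((↑) ∘ h i) (h j) * (l j : ℂ)) * τ +
            2 * ∑ i, ∑ j, z i * Bpair A ((↑) ∘ h i) (h j) * (l j : ℂ))) *
        thetaSeries A v h k τ z := by
  classical
  set L : Fin f → ℤ := fun i => ∑ j, l j * h j i with hL
  unfold thetaSeries
  rw [← (Equiv.subRight L).tsum_eq, ← tsum_mul_left]
  refine tsum_congr fun m => ?_
  simp only [Equiv.subRight_apply]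
  -- abbreviations
  have hBL : ∀ w : Fin f → ℂ, Bpair A w L = ∑ j, (l j : ℂ) * Bpair A w (h j) := by
    intro w; rw [hL]; exact Bpair_sum_right A w l h
  -- v pairing invariant
  have hQ1 : Bpair A v (m - L) = Bpair A v m := by
    rw [Bpair_sub_right, hBL]
    simp [hv]
  -- shift of B(m, h j)
  have h2 : ∀ j, Bpair A ((↑) ∘ (m - L)) (h j)
      = Bpair A ((↑) ∘ m) (h j) - ∑ i, (l i : ℂ) * Bpair A ((↑) ∘ h i) (h j) := by
    intro j
    rw [Bpair_symm A hAsymm (m - L) (h j), Bpair_sub_right,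
      Bpair_symm A hAsymm (h j) m, hBL]
    congr 1
    exact Finset.sum_congr rfl fun i _ => by rw [Bpair_symm A hAsymm (h j) (h i)]
  -- shift of quadratic form
  have h1 : Bpair A ((↑) ∘ (m - L)) (m - L)
      = Bpair A ((↑) ∘ m) m - 2 * ∑ j, (l j : ℂ) * Bpair A ((↑) ∘ m) (h j)
        + ∑ j, (l j : ℂ) * ∑ i, (l i : ℂ) * Bpair A ((↑) ∘ h i) (h j) := by
    rw [Bpair_sub_right, Bpair_symm A hAsymm (m - L) m, Bpair_sub_right, hBL, hBL]
    have expand : ∑ j, (l j : ℂ) * Bpair A ((↑) ∘ (m - L)) (h j)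
        = ∑ j, (l j : ℂ) * Bpair A ((↑) ∘ m) (h j)
          - ∑ j, (l j : ℂ) * ∑ i, (l i : ℂ) * Bpair A ((↑) ∘ h i) (h j) := by
      rw [← Finset.sum_sub_distrib]
      exact Finset.sum_congr rfl fun j _ => by rw [h2 j]; ring
    rw [expand]; ring
  -- the integer appearing in the periodicity factor
  set N : ℤ := ∑ j, μ j * (∑ a, ∑ b, (m - L) a * A a b * h j b) with hNdef
  have hμsum : ∑ j, (μ j : ℂ) *
      (Bpair A ((↑) ∘ m) (h j) - ∑ i, (l i : ℂ) * Bpair A ((↑) ∘ h i) (h j)) = (N : ℂ) := by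
    rw [hNdef]
    push_cast
    refine Finset.sum_congr rfl fun j _ => ?_
    rw [← h2 j, Bpair_eq_int]
    push_cast
    ring
  -- sum swap identities
  have hA2 : ∑ j, z j * ∑ i, (l i : ℂ) * Bpair A ((↑) ∘ h i) (h j)
      = ∑ i, ∑ j, z i * Bpair A ((↑) ∘ h i) (h j) * (l j : ℂ) := by
    calc ∑ j, z j * ∑ i, (l i : ℂ) * Bpair A ((↑) ∘ h i) (h j)
        = ∑ j, ∑ i, z j * Bpair A ((↑) ∘ h j) (h i) * (l i : ℂ) := by
          refine Finset.sum_congr rfl fun j _ => ?_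
          rw [Finset.mul_sum]
          refine Finset.sum_congr rfl fun i _ => ?_
          rw [Bpair_symm A hAsymm (h i) (h j)]; ring
      _ = ∑ i, ∑ j, z i * Bpair A ((↑) ∘ h i) (h j) * (l j : ℂ) := rfl
  have hB2 : ∑ j, (l j : ℂ) * ∑ i, (l i : ℂ) * Bpair A ((↑) ∘ h i) (h j)
      = ∑ i, ∑ j, (l i : ℂ) * Bpair A ((↑) ∘ h i) (h j) * (l j : ℂ) := by
    calc ∑ j, (l j : ℂ) * ∑ i, (l i : ℂ) * Bpair A ((↑) ∘ h i) (h j)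
        = ∑ j, ∑ i, (l j : ℂ) * Bpair A ((↑) ∘ h j) (h i) * (l i : ℂ) := by
          refine Finset.sum_congr rfl fun j _ => ?_
          rw [Finset.mul_sum]
          refine Finset.sum_congr rfl fun i _ => ?_
          rw [Bpair_symm A hAsymm (h i) (h j)]; ring
      _ = ∑ i, ∑ j, (l i : ℂ) * Bpair A ((↑) ∘ h i) (h j) * (l j : ℂ) := rfl
  -- expansion of the linear exponent sum
  have hsum : ∑ j, (z j + (l j : ℂ) * τ + (μ j : ℂ)) * Bpair A ((↑) ∘ (m - L)) (h j)
      = (∑ j, z j * Bpair A ((↑) ∘ m) (h j))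
        - (∑ i, ∑ j, z i * Bpair A ((↑) ∘ h i) (h j) * (l j : ℂ))
        + τ * (∑ j, (l j : ℂ) * Bpair A ((↑) ∘ m) (h j))
        - τ * (∑ i, ∑ j, (l i : ℂ) * Bpair A ((↑) ∘ h i) (h j) * (l j : ℂ))
        + (N : ℂ) := by
    have step : ∑ j, (z j + (l j : ℂ) * τ + (μ j : ℂ)) * Bpair A ((↑) ∘ (m - L)) (h j)
        = ∑ j, ((z j * Bpair A ((↑) ∘ m) (h j)
            - z j * ∑ i, (l i : ℂ) * Bpair A ((↑) ∘ h i) (h j))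
            + τ * ((l j : ℂ) * Bpair A ((↑) ∘ m) (h j))
            - τ * ((l j : ℂ) * ∑ i, (l i : ℂ) * Bpair A ((↑) ∘ h i) (h j))
            + (μ j : ℂ) * (Bpair A ((↑) ∘ m) (h j)
                - ∑ i, (l i : ℂ) * Bpair A ((↑) ∘ h i) (h j))) :=
      Finset.sum_congr rfl fun j _ => by rw [h2 j]; ring
    rw [step]
    simp only [Finset.sum_add_distrib, Finset.sum_sub_distrib, ← Finset.mul_sum]
    rw [hA2, hB2, hμsum]
  -- main exponent identity
  have key : (Real.pi : ℂ) * I * τ * Bpair A ((↑) ∘ (m - L)) (m - L)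
        + 2 * (Real.pi : ℂ) * I *
          ∑ j, (z j + (l j : ℂ) * τ + (μ j : ℂ)) * Bpair A ((↑) ∘ (m - L)) (h j)
      = -((Real.pi : ℂ) * I) *
          ((∑ i, ∑ j, (l i : ℂ) * Bpair A ((↑) ∘ h i) (h j) * (l j : ℂ)) * τ +
            2 * ∑ i, ∑ j, z i * Bpair A ((↑) ∘ h i) (h j) * (l j : ℂ))
        + ((Real.pi : ℂ) * I * τ * Bpair A ((↑) ∘ m) m
            + 2 * (Real.pi : ℂ) * I * ∑ j, z j * Bpair A ((↑) ∘ m) (h j))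
        + (N : ℂ) * (2 * (Real.pi : ℂ) * I) := by
    rw [h1, hsum, hB2]
    ring
  rw [hQ1]
  calc Bpair A v m ^ k *
        Complex.exp ((Real.pi : ℂ) * I * τ * Bpair A ((↑) ∘ (m - L)) (m - L)) *
        Complex.exp (2 * (Real.pi : ℂ) * I *
          ∑ j, (z j + (l j : ℂ) * τ + (μ j : ℂ)) * Bpair A ((↑) ∘ (m - L)) (h j))
      = Bpair A v m ^ k *
        Complex.exp ((Real.pi : ℂ) * I * τ * Bpair A ((↑) ∘ (m - L)) (m - L)
          + 2 * (Real.pi : ℂ) * I *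
            ∑ j, (z j + (l j : ℂ) * τ + (μ j : ℂ)) * Bpair A ((↑) ∘ (m - L)) (h j)) := by
        rw [mul_assoc, ← Complex.exp_add]
    _ = Bpair A v m ^ k *
        (Complex.exp (-((Real.pi : ℂ) * I) *
            ((∑ i, ∑ j, (l i : ℂ) * Bpair A ((↑) ∘ h i) (h j) * (l j : ℂ)) * τ +
              2 * ∑ i, ∑ j, z i * Bpair A ((↑) ∘ h i) (h j) * (l j : ℂ))
          + ((Real.pi : ℂ) * I * τ * Bpair A ((↑) ∘ m) m
              + 2 * (Real.pi : ℂ) * I * ∑ j, z j * Bpair A ((↑) ∘ m) (h j))) *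
          Complex.exp ((N : ℂ) * (2 * (Real.pi : ℂ) * I))) := by
        rw [key, Complex.exp_add]
    _ = Complex.exp (-((Real.pi : ℂ) * I) *
            ((∑ i, ∑ j, (l i : ℂ) * Bpair A ((↑) ∘ h i) (h j) * (l j : ℂ)) * τ +
              2 * ∑ i, ∑ j, z i * Bpair A ((↑) ∘ h i) (h j) * (l j : ℂ))) *
          (Bpair A v m ^ k *
            Complex.exp ((Real.pi : ℂ) * I * τ * Bpair A ((↑) ∘ m) m) *
            Complex.exp (2 * (Real.pi : ℂ) * I * ∑ j, z j * Bpair A ((↑) ∘ m) (h j))) := by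
        rw [Complex.exp_int_mul_two_pi_mul_I, Complex.exp_add, Complex.exp_add]
        ring
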